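/- There exists a constant C > 0 such that for every odd prime p one has κ_p ≤ C·√(η_{0,p}); equivalently, κ_p² ≤ C²·η_{0,p} for all odd primes p. -/

import Mathlib

def fermatQuotient (p : ℕ) (k : ℤ) : ℕ :=
  (((k ^ (p - 1) - 1) / p) % p).toNat

noncomputable def kappa (p : ℕ) : ℕ :=
  sInf {n : ℕ | 0 < n ∧ ¬ p ∣ n ∧ fermatQuotient p n ≠ 0}

def mirimanoff (p : ℕ) (t : ZMod p) : ZMod p :=
  ∑ j ∈ Finset.Icc 1 (p - 1), (j : ZMod p)⁻¹ * t ^ j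

/-- η_{0,p}: the number of c ∈ 𝔽_p with γ_p(c) = 0. -/
def eta0 (p : ℕ) : ℕ :=
  ((Finset.range p).filter (fun c : ℕ => mirimanoff p (c : ZMod p) = 0)).card

open Finset

/-- `fermatQuotient p k = 0` iff `p² ∣ k^(p-1) - 1`, for `p` prime not dividing `k`. -/
lemma fq_zero_iff {p : ℕ} (hp : p.Prime) {k : ℤ} (hk : ¬ (p:ℤ) ∣ k) :
    fermatQuotient p k = 0 ↔ (p:ℤ) * p ∣ k ^ (p - 1) - 1 := by
  haveI : Fact p.Prime := ⟨hp⟩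
  have hp0 : (0:ℤ) < p := by exact_mod_cast hp.pos
  have hfer : (p:ℤ) ∣ k ^ (p - 1) - 1 := by
    have h1 : ((k : ZMod p)) ≠ 0 := by rwa [Ne, ZMod.intCast_zmod_eq_zero_iff_dvd]
    have h2 : ((k ^ (p - 1) - 1 : ℤ) : ZMod p) = 0 := by
      push_cast
      rw [ZMod.pow_card_sub_one_eq_one h1]; ring
    exact (ZMod.intCast_zmod_eq_zero_iff_dvd _ _).mp h2
  unfold fermatQuotient
  rw [Int.toNat_eq_zero]
  constructor
  · intro h
    have h0 : (k ^ (p - 1) - 1) / p % p = 0 :=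
      le_antisymm h (Int.emod_nonneg _ (ne_of_gt hp0))
    have h1 : (p:ℤ) ∣ (k ^ (p - 1) - 1) / p := Int.dvd_of_emod_eq_zero h0
    exact (Int.dvd_div_iff_mul_dvd hfer).mp h1
  · intro h
    have h1 : (p:ℤ) ∣ (k ^ (p - 1) - 1) / p := (Int.dvd_div_iff_mul_dvd hfer).mpr h
    rw [Int.emod_eq_zero_of_dvd h1]

/-- If `p² ∣ x^(p-1) - 1` then `p² ∣ x^p - x`. -/
lemma pow_p_sub_self {p : ℕ} (hp : 0 < p) {x : ℤ} (h : (p:ℤ) * p ∣ x ^ (p - 1) - 1) :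
    (p:ℤ) * p ∣ x ^ p - x := by
  have hpe : p - 1 + 1 = p := Nat.succ_pred_eq_of_pos hp
  have he : x ^ p - x = x * (x ^ (p - 1) - 1) := by
    conv_lhs => rw [← hpe]
    rw [pow_succ]; ring
  rw [he]
  exact h.mul_left x

/-- Pigeonhole: not all of `1,…,N` can have vanishing Fermat quotient if `N(N-1) ≥ p`. -/
lemma lemA {p : ℕ} (hp : p.Prime) {N : ℕ} (hN2 : 2 ≤ N) (hNp : N ≤ p - 1)
    (hNN : p ≤ N * (N - 1))
    (hall : ∀ k : ℕ, 1 ≤ k → k ≤ N → (p:ℤ) * p ∣ (k:ℤ) ^ (p - 1) - 1) : False := by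
  have hppos := hp.pos
  have hN0 : 0 < N := by omega
  obtain ⟨m, hm⟩ : ∃ m, m = p / N + 1 := ⟨_, rfl⟩
  have hmN : m ≤ N := by
    have h1 : p / N ≤ (N * (N - 1)) / N := Nat.div_le_div_right hNN
    rw [Nat.mul_div_cancel_left _ hN0] at h1
    omega
  obtain ⟨u, hu⟩ : ∃ u, m * N = u := ⟨_, rfl⟩
  have hum : p < u := by
    rw [← hu, hm]
    exact (Nat.div_lt_iff_lt_mul hN0).mp (Nat.lt_succ_self _)
  have hule : u ≤ p + N := by
    rw [← hu, hm, Nat.succ_mul]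
    have := Nat.div_mul_le_self p N
    omega
  obtain ⟨v, hpv⟩ : ∃ v, u = p + v := ⟨u - p, by omega⟩
  have hv1 : 1 ≤ v := by omega
  have hvN : v ≤ N := by omega
  have huv : (u:ℤ) - v = p := by
    rw [hpv]; push_cast; ring
  have hm1 : 1 ≤ m := by rw [hm]; exact Nat.succ_le_succ (Nat.zero_le _)
  have hWu : (p:ℤ) * p ∣ (u:ℤ) ^ (p - 1) - 1 := by
    have hWm := hall m hm1 hmN
    have hWN := hall N (by omega) le_rfl
    have he : ((u:ℤ)) ^ (p-1) - 1 = (m:ℤ)^(p-1) * ((N:ℤ)^(p-1) - 1) + ((m:ℤ)^(p-1) - 1) := by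
      rw [← hu]; push_cast; ring
    rw [he]
    exact dvd_add (hWN.mul_left _) hWm
  have hWv := hall v hv1 hvN
  have h1 : (p:ℤ) * p ∣ (u:ℤ) ^ p - (v:ℤ) ^ p := by
    have hd : (p:ℤ) ∣ (u:ℤ) - v := by rw [huv]
    have h6 := dvd_sub_pow_of_dvd_sub hd 1
    simpa [pow_one, pow_two, sq] using h6
  have h2 := pow_p_sub_self hppos hWu
  have h3 := pow_p_sub_self hppos hWv
  have hfinal : (p:ℤ) * p ∣ (p:ℤ) := by
    have h4 : (p:ℤ) * p ∣ ((u:ℤ)^p - (v:ℤ)^p) - ((u:ℤ)^p - u) + ((v:ℤ)^p - v) :=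
      (dvd_sub h1 h2).add h3
    have e : ((u:ℤ)^p - (v:ℤ)^p) - ((u:ℤ)^p - u) + ((v:ℤ)^p - v) = (u:ℤ) - v := by ring
    rw [e, huv] at h4
    exact h4
  have hle : (p:ℤ) * p ≤ p := Int.le_of_dvd (by exact_mod_cast hppos) hfinal
  have hge : (2:ℤ) ≤ p := by exact_mod_cast hp.two_le
  nlinarith

/-- `(1 + p·t)^n ≡ 1 + p·n·t  (mod p²)`. -/
lemma onep (p : ℕ) (t : ℤ) : ∀ n : ℕ, (p:ℤ) * p ∣ (1 + p * t) ^ n - (1 + p * (n * t))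
  | 0 => by simp
  | (n+1) => by
    obtain ⟨k, hk⟩ := onep p t n
    refine ⟨k * (1 + p * t) + n * t * t, ?_⟩
    have he : ((1:ℤ) + p * t) ^ n = (1 + p * (n * t)) + (p * p) * k := by linarith [hk]
    push_cast
    rw [pow_succ, he]
    ring

/-- The Fermat quotient of `p-1` is nonzero (for odd prime `p`). -/
lemma fq_pred_ne_zero {p : ℕ} (hp : p.Prime) (hodd : Odd p) :
    fermatQuotient p ((p - 1 : ℕ) : ℤ) ≠ 0 := by
  have hp2 := hp.two_le
  have hp3 : 3 ≤ p := by
    rcases hodd with ⟨r, hr⟩; omega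
  have hndvd : ¬ (p:ℤ) ∣ ((p - 1 : ℕ) : ℤ) := by
    rw [Int.natCast_dvd_natCast]
    intro h
    have := Nat.le_of_dvd (by omega) h
    omega
  rw [Ne, fq_zero_iff hp hndvd]
  intro hdvd
  set n : ℕ := (p - 1) / 2 with hn
  have h2n : 2 * n = p - 1 := by
    rcases hodd with ⟨r, hr⟩
    omega
  have h2nz : (2:ℤ) * (n:ℤ) = (p:ℤ) - 1 := by omega
  have hx : ((p - 1 : ℕ) : ℤ) ^ (p - 1) = (1 + (p:ℤ) * ((p:ℤ) - 2)) ^ n := by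
    have hc : ((p - 1 : ℕ) : ℤ) = (p:ℤ) - 1 := by omega
    rw [hc, ← h2n, pow_mul]
    congr 1
    ring
  have honep := onep p ((p:ℤ) - 2) n
  have hd1 : (p:ℤ) ∣ (n:ℤ) * ((p:ℤ) - 2) - 1 := by
    have h2 : (2:ℤ) * ((n:ℤ) * ((p:ℤ) - 2) - 1) = (p:ℤ) * ((p:ℤ) - 3) := by
      linear_combination ((p:ℤ) - 2) * h2nz
    have hdvd2 : (p:ℤ) ∣ 2 * ((n:ℤ) * ((p:ℤ) - 2) - 1) := ⟨(p:ℤ) - 3, h2⟩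
    have hpint : Prime (p:ℤ) := Nat.prime_iff_prime_int.mp hp
    rcases hpint.dvd_mul.mp hdvd2 with h | h
    · exfalso
      have := Int.le_of_dvd (by norm_num) h
      omega
    · exact h
  have hd2 : (p:ℤ) * p ∣ ((p - 1 : ℕ) : ℤ) ^ (p - 1) - (1 + p) := by
    have e : ((p - 1 : ℕ) : ℤ) ^ (p - 1) - (1 + p)
        = ((1 + (p:ℤ) * ((p:ℤ) - 2)) ^ n - (1 + p * ((n:ℤ) * ((p:ℤ) - 2))))
          + (p:ℤ) * ((n:ℤ) * ((p:ℤ) - 2) - 1) := by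
      rw [hx]; ring
    rw [e]
    exact dvd_add honep (mul_dvd_mul_left _ hd1)
  have hfin : (p:ℤ) * p ∣ (p:ℤ) := by
    have h7 := dvd_sub hdvd hd2
    have e : ((p - 1 : ℕ) : ℤ) ^ (p - 1) - 1 - (((p - 1 : ℕ) : ℤ) ^ (p - 1) - (1 + p)) = (p:ℤ) := by
      ring
    rwa [e] at h7
  have hle := Int.le_of_dvd (by exact_mod_cast hp.pos) hfin
  have hge : (2:ℤ) ≤ p := by exact_mod_cast hp2
  nlinarith

/-- `C(p-1, k) ≡ (-1)^k (mod p)`. -/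
lemma choose_pred_cast {p : ℕ} (hp : p.Prime) :
    ∀ k, k ≤ p - 1 → (((p - 1).choose k : ℕ) : ZMod p) = (-1) ^ k := by
  haveI : Fact p.Prime := ⟨hp⟩
  have hp2 := hp.two_le
  intro k
  induction k with
  | zero => simp
  | succ k ih =>
    intro hk
    have hk' : k ≤ p - 1 := by omega
    have hrec : (p - 1).choose (k + 1) * (k + 1) = (p - 1).choose k * (p - 1 - k) :=
      Nat.choose_succ_right_eq _ _
    have hcast : (((p - 1).choose (k + 1) : ℕ) : ZMod p) * (((k + 1 : ℕ) : ℕ) : ZMod p)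
        = (((p - 1).choose k : ℕ) : ZMod p) * (((p - 1 - k : ℕ) : ℕ) : ZMod p) := by
      exact_mod_cast congrArg (Nat.cast : ℕ → ZMod p) hrec
    have hsub : (((p - 1 - k : ℕ) : ℕ) : ZMod p) = -(((k + 1 : ℕ) : ℕ) : ZMod p) := by
      have h2 : p - 1 - k + (k + 1) = p := by omega
      have h3 : (((p - 1 - k : ℕ) : ℕ) : ZMod p) + (((k + 1 : ℕ) : ℕ) : ZMod p)
          = ((p : ℕ) : ZMod p) := by
        exact_mod_cast congrArg (Nat.cast : ℕ → ZMod p) h2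
      rw [ZMod.natCast_self] at h3
      exact eq_neg_of_add_eq_zero_left h3
    have hinv : (((k + 1 : ℕ) : ℕ) : ZMod p) ≠ 0 := by
      rw [Ne, ZMod.natCast_eq_zero_iff]
      intro hdvd
      have := Nat.le_of_dvd (by omega) hdvd
      omega
    have hgoal : (((p - 1).choose (k + 1) : ℕ) : ZMod p) * (((k + 1 : ℕ) : ℕ) : ZMod p)
        = (-1) ^ (k + 1) * (((k + 1 : ℕ) : ℕ) : ZMod p) := by
      rw [hcast, hsub, ih hk']
      ring
    exact mul_right_cancel₀ hinv hgoal

/-- Key identity: if the Fermat quotients of `a`, `b`, `a+b` vanish then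
`γ_p(-a/b) = 0`. -/
lemma mirim_eq_zero {p : ℕ} (hp : p.Prime) {a b : ℕ}
    (ha1 : 1 ≤ a) (hb1 : 1 ≤ b) (hab : a + b ≤ p - 1)
    (hA : (p:ℤ) * p ∣ (a:ℤ) ^ (p - 1) - 1)
    (hB : (p:ℤ) * p ∣ (b:ℤ) ^ (p - 1) - 1)
    (hAB : (p:ℤ) * p ∣ ((a:ℤ) + b) ^ (p - 1) - 1) :
    mirimanoff p (-(a : ZMod p) * (b : ZMod p)⁻¹) = 0 := by
  haveI : Fact p.Prime := ⟨hp⟩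
  have hp2 := hp.two_le
  have hpe : p - 1 + 1 = p := by omega
  -- (1) p² ∣ (a+b)^p - a^p - b^p
  have hdvd : (p:ℤ) * p ∣ ((a:ℤ) + b) ^ p - (a:ℤ) ^ p - (b:ℤ) ^ p := by
    have e : ((a:ℤ) + b) ^ p - (a:ℤ) ^ p - (b:ℤ) ^ p
        = ((a:ℤ) + b) * (((a:ℤ) + b) ^ (p - 1) - 1) - (a:ℤ) * ((a:ℤ) ^ (p - 1) - 1)
          - (b:ℤ) * ((b:ℤ) ^ (p - 1) - 1) := by
      conv_lhs => rw [← hpe]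
      rw [pow_succ, pow_succ, pow_succ]; ring
    rw [e]
    exact dvd_sub (dvd_sub (hAB.mul_left _) (hA.mul_left _)) (hB.mul_left _)
  -- (2) binomial expansion
  have hbin : ((a:ℤ) + b) ^ p - (a:ℤ) ^ p - (b:ℤ) ^ p
      = ∑ j ∈ Icc 1 (p - 1), (p.choose j : ℤ) * (a:ℤ) ^ j * (b:ℤ) ^ (p - j) := by
    have hins : range (p + 1) = insert 0 (insert p (Icc 1 (p - 1))) := by
      ext x; simp only [Finset.mem_range, Finset.mem_insert, Finset.mem_Icc]; omega
    rw [add_pow, hins, Finset.sum_insert, Finset.sum_insert]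
    · have hterm : ∀ j ∈ Icc 1 (p - 1),
          (a:ℤ) ^ j * (b:ℤ) ^ (p - j) * (p.choose j : ℕ)
            = (p.choose j : ℤ) * (a:ℤ) ^ j * (b:ℤ) ^ (p - j) := by
        intro j hj; push_cast; ring
      rw [Finset.sum_congr rfl hterm]
      simp only [pow_zero, Nat.sub_zero, Nat.choose_zero_right, Nat.cast_one, mul_one, one_mul,
        Nat.sub_self, Nat.choose_self]
      ring
    · simp only [Finset.mem_Icc]; omega
    · simp only [Finset.mem_insert, Finset.mem_Icc]; omega
  -- (3) the natural number T with p * T = Σ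
  set T : ℕ := ∑ j ∈ Icc 1 (p - 1), p.choose j / p * a ^ j * b ^ (p - j) with hT
  have hpT : p * T = ∑ j ∈ Icc 1 (p - 1), p.choose j * a ^ j * b ^ (p - j) := by
    rw [hT, Finset.mul_sum]
    refine Finset.sum_congr rfl ?_
    intro j hj
    rw [Finset.mem_Icc] at hj
    have hdj : p ∣ p.choose j := hp.dvd_choose_self (by omega) (by omega)
    rw [← mul_assoc, ← mul_assoc, Nat.mul_div_cancel' hdj]
  -- (4) p ∣ T
  have hT0 : ((T : ℕ) : ZMod p) = 0 := by
    have h2 : ((p * T : ℕ) : ℤ) = ∑ j ∈ Icc 1 (p - 1), (p.choose j : ℤ) * (a:ℤ) ^ j * (b:ℤ) ^ (p - j) := by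
      rw [hpT]; push_cast; rfl
    have h1 : (p:ℤ) * p ∣ (p:ℤ) * (T:ℤ) := by
      rw [hbin] at hdvd
      have h3 : (p:ℤ) * (T:ℤ) = ((p * T : ℕ) : ℤ) := by push_cast; ring
      rw [h3, h2]
      exact hdvd
    have h4 : (p:ℤ) ∣ (T:ℤ) :=
      (mul_dvd_mul_iff_left (show (p:ℤ) ≠ 0 by exact_mod_cast hp.ne_zero)).mp h1
    rw [ZMod.natCast_eq_zero_iff]
    exact_mod_cast h4
  -- (5) compute b^p * γ_p(-a/b)
  have hB0 : ((b : ℕ) : ZMod p) ≠ 0 := by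
    rw [Ne, ZMod.natCast_eq_zero_iff]
    intro hdq; have := Nat.le_of_dvd (by omega) hdq; omega
  have key : ((b:ℕ) : ZMod p) ^ p * mirimanoff p (-((a:ℕ) : ZMod p) * ((b:ℕ) : ZMod p)⁻¹)
      = ∑ j ∈ Icc 1 (p - 1),
          -(((p.choose j / p : ℕ) : ZMod p) * ((a:ℕ) : ZMod p) ^ j * ((b:ℕ) : ZMod p) ^ (p - j)) := by
    rw [mirimanoff, Finset.mul_sum]
    refine Finset.sum_congr rfl ?_
    intro j hj
    rw [Finset.mem_Icc] at hj
    have hj0 : ((j : ℕ) : ZMod p) ≠ 0 := by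
      rw [Ne, ZMod.natCast_eq_zero_iff]
      intro hdvd
      have := Nat.le_of_dvd (by omega) hdvd
      omega
    have hjc : ((j : ℕ) : ZMod p) * ((p.choose j / p : ℕ) : ZMod p) = (-1) ^ (j - 1) := by
      have hdj : p ∣ p.choose j := hp.dvd_choose_self (by omega) (by omega)
      have hid : p * ((p - 1).choose (j - 1)) = p.choose j * j := by
        have h5 := Nat.add_one_mul_choose_eq (p - 1) (j - 1)
        have e1 : p - 1 + 1 = p := by omega
        have e2 : j - 1 + 1 = j := by omega
        rw [e1, e2] at h5
        exact h5
      have hnat : j * (p.choose j / p) = (p - 1).choose (j - 1) := by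
        rw [← Nat.mul_div_assoc j hdj, mul_comm j (p.choose j), ← hid,
          Nat.mul_div_cancel_left _ hp.pos]
      calc ((j : ℕ) : ZMod p) * ((p.choose j / p : ℕ) : ZMod p)
          = (((j * (p.choose j / p) : ℕ) : ℕ) : ZMod p) := by push_cast; ring
        _ = (((p - 1).choose (j - 1) : ℕ) : ZMod p) := by rw [hnat]
        _ = (-1) ^ (j - 1) := choose_pred_cast hp _ (by omega)
    have hCj : ((p.choose j / p : ℕ) : ZMod p) = ((j : ℕ) : ZMod p)⁻¹ * (-1) ^ (j - 1) := by
      rw [← hjc, inv_mul_cancel_left₀ hj0]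
    have h1j : j - 1 + 1 = j := by omega
    have hBp : ((b:ℕ) : ZMod p) ^ p = ((b:ℕ) : ZMod p) ^ (p - j) * ((b:ℕ) : ZMod p) ^ j := by
      rw [← pow_add]; congr 1; omega
    have hBij : (((b:ℕ) : ZMod p)⁻¹) ^ j * ((b:ℕ) : ZMod p) ^ j = 1 := by
      rw [← mul_pow, inv_mul_cancel₀ hB0, one_pow]
    calc ((b:ℕ) : ZMod p) ^ p * (((j : ℕ) : ZMod p)⁻¹ * (-((a:ℕ) : ZMod p) * ((b:ℕ) : ZMod p)⁻¹) ^ j)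
        = (((j : ℕ) : ZMod p)⁻¹ * (-1) ^ j) * ((a:ℕ) : ZMod p) ^ j * ((b:ℕ) : ZMod p) ^ (p - j)
            * ((((b:ℕ) : ZMod p)⁻¹) ^ j * ((b:ℕ) : ZMod p) ^ j) := by
          rw [hBp, neg_mul, neg_pow, mul_pow]
          ring
      _ = (((j : ℕ) : ZMod p)⁻¹ * (-1) ^ j) * ((a:ℕ) : ZMod p) ^ j * ((b:ℕ) : ZMod p) ^ (p - j) := by
          rw [hBij, mul_one]
      _ = -((((j : ℕ) : ZMod p)⁻¹ * (-1) ^ (j - 1)) * ((a:ℕ) : ZMod p) ^ j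
            * ((b:ℕ) : ZMod p) ^ (p - j)) := by
          have hneg : ((-1 : ZMod p)) ^ j = -((-1 : ZMod p)) ^ (j - 1) := by
            conv_lhs => rw [← h1j]
            rw [pow_succ]
            ring
          rw [hneg]
          ring
      _ = -(((p.choose j / p : ℕ) : ZMod p) * ((a:ℕ) : ZMod p) ^ j * ((b:ℕ) : ZMod p) ^ (p - j)) := by
          rw [hCj]
  -- (6) conclude
  have hTsum : ((T : ℕ) : ZMod p)
      = ∑ j ∈ Icc 1 (p - 1), ((p.choose j / p : ℕ) : ZMod p) * ((a:ℕ) : ZMod p) ^ j * ((b:ℕ) : ZMod p) ^ (p - j) := by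
    rw [hT]
    push_cast
    rfl
  have hfin : ((b:ℕ) : ZMod p) ^ p * mirimanoff p (-((a:ℕ) : ZMod p) * ((b:ℕ) : ZMod p)⁻¹) = 0 := by
    rw [key, Finset.sum_neg_distrib, ← hTsum, hT0, neg_zero]
  rcases mul_eq_zero.mp hfin with h | h
  · exact absurd h (pow_ne_zero _ hB0)
  · exact h

/-- Telescoping: `∑_{d=3}^m 1/(d(d-1)) = 1/2 - 1/m` for `m ≥ 2`. -/
lemma telescope (m : ℕ) (hm : 2 ≤ m) :
    ∑ d ∈ Icc 3 m, (1 : ℝ) / (d * (d - 1)) = 1 / 2 - 1 / m := by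
  induction m, hm using Nat.le_induction with
  | base => norm_num
  | succ m hm ih =>
    rw [Finset.sum_Icc_succ_top (by omega), ih]
    have hm0 : (m : ℝ) ≥ 2 := by exact_mod_cast hm
    have h1 : ((m + 1 : ℕ) : ℝ) = (m : ℝ) + 1 := by push_cast; ring
    rw [h1]
    have hmne : (m : ℝ) ≠ 0 := by linarith
    have hmne1 : (m : ℝ) + 1 ≠ 0 := by linarith
    rw [add_sub_cancel_right]
    field_simp
    ring

/-- At least `m²/4` coprime pairs in `[1,m]²`. -/
lemma coprime_pairs_card (m : ℕ) :
    (m : ℝ) ^ 2 / 4 ≤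
      ((((Icc 1 m) ×ˢ (Icc 1 m)).filter (fun q : ℕ × ℕ => Nat.Coprime q.1 q.2)).card : ℝ) := by
  classical
  set S := (Icc 1 m) ×ˢ (Icc 1 m) with hS
  set G := S.filter (fun q : ℕ × ℕ => Nat.Coprime q.1 q.2) with hG
  set Bd := S.filter (fun q : ℕ × ℕ => ¬ Nat.Coprime q.1 q.2) with hBd
  have hcard : G.card + Bd.card = m * m := by
    rw [hG, hBd, Finset.card_filter_add_card_filter_not, hS, Finset.card_product,
      Nat.card_Icc]
    simp
  have hsub : Bd ⊆ (Icc 2 m).biUnion (fun d =>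
      ((Icc 1 m).filter (fun x => d ∣ x)) ×ˢ ((Icc 1 m).filter (fun x => d ∣ x))) := by
    intro q hq
    rw [hBd, Finset.mem_filter, hS, Finset.mem_product, Finset.mem_Icc, Finset.mem_Icc] at hq
    obtain ⟨⟨⟨ha1, ham⟩, hb1, hbm⟩, hnc⟩ := hq
    rw [Finset.mem_biUnion]
    refine ⟨Nat.gcd q.1 q.2, ?_, ?_⟩
    · rw [Finset.mem_Icc]
      have hg1 : Nat.gcd q.1 q.2 ≠ 1 := hnc
      have hg0 : Nat.gcd q.1 q.2 ≠ 0 := by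
        intro h; rw [Nat.gcd_eq_zero_iff] at h; omega
      have hgle : Nat.gcd q.1 q.2 ≤ q.1 := Nat.le_of_dvd (by omega) (Nat.gcd_dvd_left _ _)
      omega
    · rw [Finset.mem_product, Finset.mem_filter, Finset.mem_filter, Finset.mem_Icc,
        Finset.mem_Icc]
      exact ⟨⟨⟨ha1, ham⟩, Nat.gcd_dvd_left _ _⟩, ⟨⟨hb1, hbm⟩, Nat.gcd_dvd_right _ _⟩⟩
  have hBdle : Bd.card ≤ ∑ d ∈ Icc 2 m, (m / d) * (m / d) := by
    calc Bd.card ≤ _ := Finset.card_le_card hsub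
    _ ≤ ∑ d ∈ Icc 2 m, (((Icc 1 m).filter (fun x => d ∣ x)) ×ˢ ((Icc 1 m).filter (fun x => d ∣ x))).card :=
        Finset.card_biUnion_le
    _ = ∑ d ∈ Icc 2 m, (m / d) * (m / d) := by
        refine Finset.sum_congr rfl ?_
        intro d hd
        rw [Finset.card_product]
        have hIcc : (Icc 1 m) = Ioc 0 m := by ext x; simp [Finset.mem_Icc, Finset.mem_Ioc]; omega
        rw [hIcc, Nat.Ioc_filter_dvd_card_eq_div]
  have hsumR : ((∑ d ∈ Icc 2 m, (m / d) * (m / d) : ℕ) : ℝ) ≤ 3 / 4 * (m : ℝ) ^ 2 := by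
    by_cases hm2 : 2 ≤ m
    · have hsplit : Icc 2 m = insert 2 (Icc 3 m) := by
        ext x; simp only [Finset.mem_Icc, Finset.mem_insert]; omega
      push_cast
      rw [hsplit, Finset.sum_insert (by simp)]
      have ht2 : ((m / 2 : ℕ) : ℝ) * ((m / 2 : ℕ) : ℝ) ≤ (m : ℝ) ^ 2 / 4 := by
        have h := Nat.cast_div_le (m := m) (n := 2) (α := ℝ)
        have h0 : (0 : ℝ) ≤ ((m / 2 : ℕ) : ℝ) := by positivity
        nlinarith [h]
      have ht3 : ∑ d ∈ Icc 3 m, ((m / d : ℕ) : ℝ) * ((m / d : ℕ) : ℝ) ≤ (m : ℝ) ^ 2 / 2 := by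
        have hstep : ∑ d ∈ Icc 3 m, ((m / d : ℕ) : ℝ) * ((m / d : ℕ) : ℝ)
            ≤ ∑ d ∈ Icc 3 m, (m : ℝ) ^ 2 * ((1 : ℝ) / (d * (d - 1))) := by
          refine Finset.sum_le_sum ?_
          intro d hd
          rw [Finset.mem_Icc] at hd
          have hd3 : (3 : ℝ) ≤ (d : ℝ) := by exact_mod_cast hd.1
          have hcast := Nat.cast_div_le (m := m) (n := d) (α := ℝ)
          have h0 : (0 : ℝ) ≤ ((m / d : ℕ) : ℝ) := by positivity
          have hdd1 : (0:ℝ) < (d:ℝ) * ((d:ℝ) - 1) := by nlinarith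
          calc ((m / d : ℕ) : ℝ) * ((m / d : ℕ) : ℝ) ≤ (m : ℝ) / d * ((m : ℝ) / d) := by
                nlinarith [hcast]
          _ = (m : ℝ) ^ 2 / ((d:ℝ) * (d:ℝ)) := by ring
          _ ≤ (m : ℝ) ^ 2 / ((d:ℝ) * ((d:ℝ) - 1)) := by
              apply div_le_div_of_nonneg_left (by positivity) hdd1
              nlinarith
          _ = (m : ℝ) ^ 2 * ((1 : ℝ) / (d * (d - 1))) := by ring
        rw [← Finset.mul_sum] at hstep
        rw [telescope m hm2] at hstep
        have hminv : (0:ℝ) ≤ 1 / (m:ℝ) := by positivity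
        nlinarith [hstep, sq_nonneg (m:ℝ)]
      nlinarith [ht2, ht3]
    · have : Icc 2 m = ∅ := by
        apply Finset.Icc_eq_empty; omega
      rw [this]
      simp
  have hGR : ((G.card : ℕ) : ℝ) + ((Bd.card : ℕ) : ℝ) = (m:ℝ) * m := by exact_mod_cast hcard
  have hBdR : ((Bd.card : ℕ) : ℝ) ≤ 3 / 4 * (m : ℝ) ^ 2 := by
    calc ((Bd.card : ℕ) : ℝ) ≤ ((∑ d ∈ Icc 2 m, (m / d) * (m / d) : ℕ) : ℝ) := by
          exact_mod_cast hBdle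
    _ ≤ 3 / 4 * (m : ℝ) ^ 2 := hsumR
  nlinarith [hGR, hBdR]

/-- κ_p ∈ O(√(η_{0,p})) over odd primes p. -/
theorem kappa_le_const_mul_sqrt_eta :
    ∃ C : ℝ, 0 < C ∧ ∀ p : ℕ, p.Prime → Odd p →
      (kappa p : ℝ) ≤ C * Real.sqrt (eta0 p) := by
  refine ⟨10, by norm_num, ?_⟩
  intro p hp hodd
  haveI : Fact p.Prime := ⟨hp⟩
  haveI : NeZero p := ⟨hp.ne_zero⟩
  have hp2 := hp.two_le
  have hp3 : 3 ≤ p := by rcases hodd with ⟨r, hr⟩; omega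
  -- η₀ ≥ 1 since γ_p(0) = 0
  have heta1 : 1 ≤ eta0 p := by
    rw [eta0]
    have h0 : (0 : ℕ) ∈ (Finset.range p).filter (fun c : ℕ => mirimanoff p (c : ZMod p) = 0) := by
      rw [Finset.mem_filter, Finset.mem_range]
      refine ⟨by omega, ?_⟩
      rw [mirimanoff]
      apply Finset.sum_eq_zero
      intro j hj
      rw [Finset.mem_Icc] at hj
      rw [Nat.cast_zero, zero_pow (by omega), mul_zero]
    exact Finset.card_pos.mpr ⟨0, h0⟩
  have hsq1 : (1:ℝ) ≤ Real.sqrt (eta0 p) := by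
    rw [show (1:ℝ) = Real.sqrt 1 by simp]
    apply Real.sqrt_le_sqrt
    exact_mod_cast heta1
  have hsqnn : (0:ℝ) ≤ Real.sqrt (eta0 p) := by positivity
  -- κ ≤ p - 1
  have hκle : kappa p ≤ p - 1 := by
    apply Nat.sInf_le
    refine ⟨by omega, ?_, fq_pred_ne_zero hp hodd⟩
    intro hdvd
    have := Nat.le_of_dvd (by omega) hdvd
    omega
  -- minimality of κ
  have hmin : ∀ k : ℕ, 1 ≤ k → k < kappa p → k < p → (p:ℤ) * p ∣ (k:ℤ) ^ (p - 1) - 1 := by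
    intro k hk1 hkκ hkp
    have hnd : ¬ p ∣ k := by
      intro h; have := Nat.le_of_dvd (by omega) h; omega
    have hnm := Nat.notMem_of_lt_sInf (show k < sInf {n : ℕ | 0 < n ∧ ¬ p ∣ n ∧ fermatQuotient p n ≠ 0} from hkκ)
    simp only [Set.mem_setOf_eq, not_and, not_not] at hnm
    have hfq : fermatQuotient p (k:ℤ) = 0 := hnm (by omega) hnd
    have hndZ : ¬ (p:ℤ) ∣ (k:ℤ) := by
      rw [Int.natCast_dvd_natCast]; exact hnd
    exact (fq_zero_iff hp hndZ).mp hfq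
  set κ := kappa p with hκ
  by_cases hκ9 : κ ≤ 9
  · calc (κ : ℝ) ≤ 9 := by exact_mod_cast hκ9
    _ ≤ 10 * Real.sqrt (eta0 p) := by nlinarith
  -- now κ ≥ 10
  push_neg at hκ9
  have hκ10 : 10 ≤ κ := hκ9
  set m : ℕ := (κ - 1) / 2 with hm
  have hm1 : 1 ≤ m := by omega
  have h2m : 2 * m ≤ κ - 1 := by omega
  have hκm : κ ≤ 2 * m + 2 := by omega
  have hmκ2 : m ≤ κ - 2 := by omega
  -- (κ-1)(κ-2) < p
  have hAc : (κ - 1) * (κ - 2) < p := by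
    by_contra hcon
    push_neg at hcon
    refine lemA hp (N := κ - 1) (by omega) (by omega) ?_ ?_
    · have : κ - 1 - 1 = κ - 2 := by omega
      rw [this]; exact hcon
    · intro k hk1 hkN
      exact hmin k hk1 (by omega) (by omega)
  have hm2p : m * m < p := by
    calc m * m ≤ (κ - 1) * (κ - 2) := Nat.mul_le_mul (by omega) hmκ2
    _ < p := hAc
  -- all the fractions -a/b are zeros of γ_p
  set G := ((Icc 1 m) ×ˢ (Icc 1 m)).filter (fun q : ℕ × ℕ => Nat.Coprime q.1 q.2) with hG
  set Z := (Finset.range p).filter (fun c : ℕ => mirimanoff p (c : ZMod p) = 0) with hZ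
  have hmem : ∀ q ∈ G, (1 ≤ q.1 ∧ q.1 ≤ m) ∧ (1 ≤ q.2 ∧ q.2 ≤ m) := by
    intro q hq
    rw [hG, Finset.mem_filter, Finset.mem_product, Finset.mem_Icc, Finset.mem_Icc] at hq
    exact hq.1
  have hmzero : ∀ q ∈ G, mirimanoff p (-(q.1 : ZMod p) * (q.2 : ZMod p)⁻¹) = 0 := by
    intro q hq
    obtain ⟨⟨ha1, ham⟩, hb1, hbm⟩ := hmem q hq
    have hab : q.1 + q.2 ≤ p - 1 := by omega
    refine mirim_eq_zero hp ha1 hb1 hab ?_ ?_ ?_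
    · exact hmin q.1 ha1 (by omega) (by omega)
    · exact hmin q.2 hb1 (by omega) (by omega)
    · have h := hmin (q.1 + q.2) (by omega) (by omega) (by omega)
      have he : ((q.1 + q.2 : ℕ) : ℤ) = (q.1 : ℤ) + q.2 := by push_cast; ring
      rwa [he] at h
  -- injection from G into Z
  have hcardle : G.card ≤ Z.card := by
    apply Finset.card_le_card_of_injOn (fun q => (-(q.1 : ZMod p) * (q.2 : ZMod p)⁻¹).val)
    · intro q hq
      rw [hZ, Finset.mem_coe, Finset.mem_filter, Finset.mem_range]
      constructor
      · exact ZMod.val_lt _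
      · rw [ZMod.natCast_zmod_val]
        exact hmzero q hq
    · intro q hq q' hq' heq
      obtain ⟨⟨ha1, ham⟩, hb1, hbm⟩ := hmem q hq
      obtain ⟨⟨ha1', ham'⟩, hb1', hbm'⟩ := hmem q' hq'
      have hBne : (q.2 : ZMod p) ≠ 0 := by
        rw [Ne, ZMod.natCast_eq_zero_iff]
        intro h; have := Nat.le_of_dvd (by omega) h; omega
      have hBne' : (q'.2 : ZMod p) ≠ 0 := by
        rw [Ne, ZMod.natCast_eq_zero_iff]
        intro h; have := Nat.le_of_dvd (by omega) h; omega
      have heq2 : -(q.1 : ZMod p) * (q.2 : ZMod p)⁻¹ = -(q'.1 : ZMod p) * (q'.2 : ZMod p)⁻¹ := by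
        have := congrArg (fun x : ℕ => (x : ZMod p)) heq
        simpa [ZMod.natCast_zmod_val] using this
      have hcross : (q.1 : ZMod p) * (q'.2 : ZMod p) = (q'.1 : ZMod p) * (q.2 : ZMod p) := by
        have h1 : (q.1 : ZMod p) * (q.2 : ZMod p)⁻¹ = (q'.1 : ZMod p) * (q'.2 : ZMod p)⁻¹ := by
          have := heq2
          rw [neg_mul, neg_mul, neg_inj] at this
          exact this
        field_simp at h1
        exact h1.trans (mul_comm _ _)
      have hnat : q.1 * q'.2 = q'.1 * q.2 := by
        have hlt1 : q.1 * q'.2 < p := by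
          calc q.1 * q'.2 ≤ m * m := Nat.mul_le_mul ham hbm'
          _ < p := hm2p
        have hlt2 : q'.1 * q.2 < p := by
          calc q'.1 * q.2 ≤ m * m := Nat.mul_le_mul ham' hbm
          _ < p := hm2p
        have hc : ((q.1 * q'.2 : ℕ) : ZMod p) = ((q'.1 * q.2 : ℕ) : ZMod p) := by
          push_cast
          exact hcross
        have := congrArg ZMod.val hc
        rwa [ZMod.val_cast_of_lt hlt1, ZMod.val_cast_of_lt hlt2] at this
      -- use coprimality
      have hcop : Nat.Coprime q.1 q.2 := by
        have hqm : q ∈ G := hq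
        rw [hG, Finset.mem_filter] at hqm; exact hqm.2
      have hcop' : Nat.Coprime q'.1 q'.2 := by
        have hqm : q' ∈ G := hq'
        rw [hG, Finset.mem_filter] at hqm; exact hqm.2
      have hd1 : q.1 ∣ q'.1 := by
        have : q.1 ∣ q'.1 * q.2 := ⟨q'.2, by omega⟩
        exact hcop.dvd_of_dvd_mul_right this
      have hd2 : q'.1 ∣ q.1 := by
        have : q'.1 ∣ q.1 * q'.2 := ⟨q.2, by omega⟩
        exact hcop'.dvd_of_dvd_mul_right this
      have he1 : q.1 = q'.1 := Nat.dvd_antisymm hd1 hd2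
      have he2 : q.2 = q'.2 := by
        have : q.1 * q'.2 = q.1 * q.2 := by rw [hnat, he1]
        exact (Nat.eq_of_mul_eq_mul_left (by omega) this).symm
      exact Prod.ext he1 he2
  -- numeric chain
  have hGcard : (m : ℝ) ^ 2 / 4 ≤ (G.card : ℝ) := coprime_pairs_card m
  have hZeta : (Z.card : ℝ) = (eta0 p : ℝ) := by rw [hZ, eta0]
  have hm4 : (m : ℝ) ^ 2 ≤ 4 * (eta0 p : ℝ) := by
    have h1 : (G.card : ℝ) ≤ (eta0 p : ℝ) := by
      rw [← hZeta]; exact_mod_cast hcardle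
    nlinarith
  have hmsqrt : (m : ℝ) ≤ 2 * Real.sqrt (eta0 p) := by
    have h2 : (m : ℝ) ≤ Real.sqrt (4 * (eta0 p : ℝ)) :=
      Real.le_sqrt_of_sq_le hm4
    have h3 : Real.sqrt (4 * (eta0 p : ℝ)) = 2 * Real.sqrt (eta0 p) := by
      rw [show (4 : ℝ) * (eta0 p : ℝ) = 2 ^ 2 * (eta0 p : ℝ) by ring,
        Real.sqrt_mul (by positivity), Real.sqrt_sq (by norm_num)]
    rwa [h3] at h2
  have hκreal : (κ : ℝ) ≤ 2 * (m : ℝ) + 2 := by exact_mod_cast hκm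
  have hmge1 : (1:ℝ) ≤ (m:ℝ) := by exact_mod_cast hm1
  calc (κ : ℝ) ≤ 2 * (m : ℝ) + 2 := hκreal
  _ ≤ 4 * (m : ℝ) := by linarith
  _ ≤ 8 * Real.sqrt (eta0 p) := by linarith
  _ ≤ 10 * Real.sqrt (eta0 p) := by linarith
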